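/- At every point of U, β satisfies the Riccati-type equation along backward characteristics: β_t − c·β_x = k₁·( −k₂·(α + 3β) + α·β − β² ) (Theorem 1.1, equation for β). -/

import Mathlib

open Real

section helpers
variable {f g : ℝ × ℝ → ℝ} {pt v w : ℝ × ℝ} {U : Set (ℝ × ℝ)}

lemma pd_congr (hU : IsOpen U) (h : ∀ q ∈ U, f q = g q) (hpt : pt ∈ U) :
    fderiv ℝ f pt = fderiv ℝ g pt :=
  Filter.EventuallyEq.fderiv_eq (Filter.eventuallyEq_of_mem (hU.mem_nhds hpt) h)

lemma pd_add (hf : DifferentiableAt ℝ f pt) (hg : DifferentiableAt ℝ g pt) :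
    fderiv ℝ (fun q => f q + g q) pt v = fderiv ℝ f pt v + fderiv ℝ g pt v := by
  simp [fderiv_fun_add hf hg]

lemma pd_sub (hf : DifferentiableAt ℝ f pt) (hg : DifferentiableAt ℝ g pt) :
    fderiv ℝ (fun q => f q - g q) pt v = fderiv ℝ f pt v - fderiv ℝ g pt v := by
  simp [fderiv_fun_sub hf hg]

lemma pd_mul (hf : DifferentiableAt ℝ f pt) (hg : DifferentiableAt ℝ g pt) :
    fderiv ℝ (fun q => f q * g q) pt v = f pt * fderiv ℝ g pt v + g pt * fderiv ℝ f pt v := by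
  simp [fderiv_fun_mul hf hg]

lemma pd_const_mul (hg : DifferentiableAt ℝ g pt) (a : ℝ) :
    fderiv ℝ (fun q => a * g q) pt v = a * fderiv ℝ g pt v := by
  simp [fderiv_const_mul hg a]

lemma pd_rpow (hf : DifferentiableAt ℝ f pt) (h0 : f pt ≠ 0) (r : ℝ) :
    fderiv ℝ (fun q => f q ^ r) pt v = r * f pt ^ (r - 1) * fderiv ℝ f pt v := by
  rw [(hf.hasFDerivAt.rpow_const (Or.inl h0)).fderiv]
  simp [mul_assoc]

lemma diff_pd (hU : IsOpen U) (hf : ContDiffOn ℝ 2 f U) (hpt : pt ∈ U) (v : ℝ × ℝ) :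
    DifferentiableAt ℝ (fun q => fderiv ℝ f q v) pt := by
  have h1 : ContDiffAt ℝ 2 f pt := hf.contDiffAt (hU.mem_nhds hpt)
  have h2 : DifferentiableAt ℝ (fderiv ℝ f) pt :=
    (h1.fderiv_right (m := 1) (by norm_num)).differentiableAt one_ne_zero
  exact (ContinuousLinearMap.apply ℝ ℝ v).differentiableAt.comp pt h2

lemma pd_swap (hU : IsOpen U) (hf : ContDiffOn ℝ 2 f U) (hpt : pt ∈ U) (v w : ℝ × ℝ) :
    fderiv ℝ (fun q => fderiv ℝ f q v) pt w = fderiv ℝ (fun q => fderiv ℝ f q w) pt v := by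
  have h1 : ContDiffAt ℝ 2 f pt := hf.contDiffAt (hU.mem_nhds hpt)
  have h2 : DifferentiableAt ℝ (fderiv ℝ f) pt :=
    (h1.fderiv_right (m := 1) (by norm_num)).differentiableAt one_ne_zero
  have key : ∀ a : ℝ × ℝ, fderiv ℝ (fun q => fderiv ℝ f q a) pt
      = ((ContinuousLinearMap.apply ℝ ℝ a).comp (fderiv ℝ (fderiv ℝ f) pt)) := by
    intro a
    have : (fun q => fderiv ℝ f q a) = (ContinuousLinearMap.apply ℝ ℝ a) ∘ (fderiv ℝ f) := rfl
    rw [this, fderiv_comp pt (ContinuousLinearMap.apply ℝ ℝ a).differentiableAt h2,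
      ContinuousLinearMap.fderiv]
  rw [key, key]
  exact (h1.isSymmSndFDerivAt (by norm_num)) w v

end helpers

/-- Partial derivative with respect to `t` (the first coordinate). -/
noncomputable def pdt (f : ℝ × ℝ → ℝ) (pt : ℝ × ℝ) : ℝ := fderiv ℝ f pt (1, 0)

/-- Partial derivative with respect to `x` (the second coordinate). -/
noncomputable def pdx (f : ℝ × ℝ → ℝ) (pt : ℝ × ℝ) : ℝ := fderiv ℝ f pt (0, 1)

/-- Theorem 1.1, equation for `β`:
`β‵ = β_t − c·β_x = k₁·(−k₂·(α + 3β) + α·β − β²)` on `U`. -/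
theorem stmt_4
    (γ Kc : ℝ) (hγ : 1 < γ) (hKc : 0 < Kc)
    (U : Set (ℝ × ℝ)) (hU : IsOpen U)
    (u z m : ℝ × ℝ → ℝ)
    (hu : ContDiffOn ℝ 2 u U) (hz : ContDiffOn ℝ 2 z U) (hm : ContDiffOn ℝ 2 m U)
    (hzpos : ∀ pt ∈ U, 0 < z pt) (hmpos : ∀ pt ∈ U, 0 < m pt)
    (c p : ℝ × ℝ → ℝ)
    (hc : c = fun pt => Kc * m pt * z pt ^ ((γ + 1) / (γ - 1)))
    (hp : p = fun pt => ((γ - 1) / (2 * γ) * Kc) * (m pt) ^ 2 * z pt ^ (2 * γ / (γ - 1)))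
    (heq1 : ∀ pt ∈ U, pdt z pt + (c pt / m pt) * pdx u pt = 0)
    (heq2 : ∀ pt ∈ U, pdt u pt + m pt * c pt * pdx z pt + 2 * (p pt / m pt) * pdx m pt = 0)
    (heq3 : ∀ pt ∈ U, pdt m pt = 0)
    (α β : ℝ × ℝ → ℝ)
    (hα : α = fun pt => pdx u pt + m pt * pdx z pt + ((γ - 1) / γ) * pdx m pt * z pt)
    (hβ : β = fun pt => pdx u pt - m pt * pdx z pt - ((γ - 1) / γ) * pdx m pt * z pt)
    (k1 k2 : ℝ × ℝ → ℝ)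
    (hk1 : k1 = fun pt => ((γ + 1) * Kc / (2 * (γ - 1))) * z pt ^ (2 / (γ - 1)))
    (hk2 : k2 = fun pt => ((γ - 1) / (γ * (γ + 1))) * z pt * pdx m pt)
 :
    ∀ pt ∈ U, pdt β pt - c pt * pdx β pt
      = k1 pt * (-k2 pt * (α pt + 3 * β pt) + α pt * β pt - (β pt) ^ 2) := by
  intro pt hpt
  have hγ1 : γ - 1 ≠ 0 := by linarith
  have hγ0 : γ ≠ 0 := by linarith
  have hγ2 : γ + 1 ≠ 0 := by linarith
  set e1 : ℝ := (γ + 1) / (γ - 1) with he1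
  set e2 : ℝ := 2 * γ / (γ - 1) with he2
  set lam : ℝ := (γ - 1) / γ with hlam
  -- pointwise differentiability facts
  have hmem := hU.mem_nhds hpt
  have hdu : DifferentiableAt ℝ u pt := (hu.contDiffAt hmem).differentiableAt two_ne_zero
  have hdz : DifferentiableAt ℝ z pt := (hz.contDiffAt hmem).differentiableAt two_ne_zero
  have hdm : DifferentiableAt ℝ m pt := (hm.contDiffAt hmem).differentiableAt two_ne_zero
  have hDu : DifferentiableAt ℝ (fun q => fderiv ℝ u q (0, 1)) pt := diff_pd hU hu hpt _
  have hDz : DifferentiableAt ℝ (fun q => fderiv ℝ z q (0, 1)) pt := diff_pd hU hz hpt _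
  have hDm : DifferentiableAt ℝ (fun q => fderiv ℝ m q (0, 1)) pt := diff_pd hU hm hpt _
  have hZpos : 0 < z pt := hzpos pt hpt
  have hz0 : z pt ≠ 0 := ne_of_gt hZpos
  have hm0 : m pt ≠ 0 := ne_of_gt (hmpos pt hpt)
  have hze1 : DifferentiableAt ℝ (fun q => z q ^ e1) pt := hdz.rpow_const (Or.inl hz0)
  have hze2 : DifferentiableAt ℝ (fun q => z q ^ e2) pt := hdz.rpow_const (Or.inl hz0)
  -- rewritten PDE identities on U
  have E1 : ∀ q ∈ U, fderiv ℝ z q (1, 0) = (-Kc) * (z q ^ e1 * fderiv ℝ u q (0, 1)) := by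
    intro q hq
    have h := heq1 q hq
    have hm0q : m q ≠ 0 := ne_of_gt (hmpos q hq)
    have hcm : c q / m q = Kc * z q ^ e1 := by rw [hc]; field_simp
    rw [hcm] at h
    simp only [pdt, pdx] at h
    linear_combination h
  have E2 : ∀ q ∈ U, fderiv ℝ u q (1, 0)
      = (-Kc) * (m q * m q * (z q ^ e1 * fderiv ℝ z q (0, 1)))
        + (-(lam * Kc)) * (m q * (z q ^ e2 * fderiv ℝ m q (0, 1))) := by
    intro q hq
    have h := heq2 q hq
    have hm0q : m q ≠ 0 := ne_of_gt (hmpos q hq)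
    have hcm : m q * c q = Kc * (m q * m q) * z q ^ e1 := by rw [hc]; ring
    have hpm : 2 * (p q / m q) = lam * Kc * (m q * z q ^ e2) := by
      rw [hp, hlam]; field_simp
    rw [hcm, hpm] at h
    simp only [pdt, pdx] at h
    linear_combination h
  have E3 : ∀ q ∈ U, fderiv ℝ m q (1, 0) = (fun _ => (0 : ℝ)) q := by
    intro q hq; exact heq3 q hq
  -- abbreviations for first and second derivatives at pt
  set Z := z pt with hZ
  set M := m pt with hM
  set UX := fderiv ℝ u pt (0, 1) with hUX
  set ZX := fderiv ℝ z pt (0, 1) with hZX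
  set MX := fderiv ℝ m pt (0, 1) with hMX
  set UXX := fderiv ℝ (fun q => fderiv ℝ u q (0, 1)) pt (0, 1) with hUXX
  set ZXX := fderiv ℝ (fun q => fderiv ℝ z q (0, 1)) pt (0, 1) with hZXX
  set MXX := fderiv ℝ (fun q => fderiv ℝ m q (0, 1)) pt (0, 1) with hMXX
  -- mixed second derivatives via symmetry and the PDE
  have hmix_m : fderiv ℝ (fun q => fderiv ℝ m q (0, 1)) pt (1, 0) = 0 := by
    rw [pd_swap hU hm hpt, pd_congr hU E3 hpt]
    simp
  have hmix_z : fderiv ℝ (fun q => fderiv ℝ z q (0, 1)) pt (1, 0)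
      = (-Kc) * (Z ^ e1 * UXX + UX * (e1 * Z ^ (e1 - 1) * ZX)) := by
    rw [pd_swap hU hz hpt, pd_congr hU E1 hpt,
      pd_const_mul (hze1.fun_mul hDu) (-Kc), pd_mul hze1 hDu, pd_rpow hdz hz0 e1]
  have hmix_u : fderiv ℝ (fun q => fderiv ℝ u q (0, 1)) pt (1, 0)
      = (-Kc) * ((M * M) * (Z ^ e1 * ZXX + ZX * (e1 * Z ^ (e1 - 1) * ZX))
          + (Z ^ e1 * ZX) * (M * MX + M * MX))
        + (-(lam * Kc)) * (M * (Z ^ e2 * MXX + MX * (e2 * Z ^ (e2 - 1) * ZX))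
          + (Z ^ e2 * MX) * MX) := by
    rw [pd_swap hU hu hpt, pd_congr hU E2 hpt,
      pd_add ((((hdm.fun_mul hdm).fun_mul (hze1.fun_mul hDz)).const_mul (-Kc)))
        (((hdm.fun_mul (hze2.fun_mul hDm)).const_mul (-(lam * Kc)))),
      pd_const_mul ((hdm.fun_mul hdm).fun_mul (hze1.fun_mul hDz)) (-Kc),
      pd_const_mul (hdm.fun_mul (hze2.fun_mul hDm)) (-(lam * Kc)),
      pd_mul (hdm.fun_mul hdm) (hze1.fun_mul hDz), pd_mul hdm (hze2.fun_mul hDm),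
      pd_mul hze1 hDz, pd_mul hze2 hDm, pd_mul hdm hdm,
      pd_rpow hdz hz0 e1, pd_rpow hdz hz0 e2]
  -- values of the PDE at pt
  have hzt : fderiv ℝ z pt (1, 0) = (-Kc) * (Z ^ e1 * UX) := E1 pt hpt
  have hmt : fderiv ℝ m pt (1, 0) = 0 := heq3 pt hpt
  -- compute β_t and β_x
  have hβt : pdt β pt
      = ((-Kc) * ((M * M) * (Z ^ e1 * ZXX + ZX * (e1 * Z ^ (e1 - 1) * ZX))
          + (Z ^ e1 * ZX) * (M * MX + M * MX))
        + (-(lam * Kc)) * (M * (Z ^ e2 * MXX + MX * (e2 * Z ^ (e2 - 1) * ZX))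
          + (Z ^ e2 * MX) * MX))
        - (M * ((-Kc) * (Z ^ e1 * UXX + UX * (e1 * Z ^ (e1 - 1) * ZX))) + ZX * 0)
        - ((lam * MX) * ((-Kc) * (Z ^ e1 * UX)) + Z * (lam * 0)) := by
    rw [hβ]
    simp only [pdt, pdx]
    rw [pd_sub (hDu.fun_sub (hdm.fun_mul hDz)) ((hDm.const_mul lam).fun_mul hdz),
      pd_sub hDu (hdm.fun_mul hDz), pd_mul hdm hDz,
      pd_mul (hDm.const_mul lam) hdz, pd_const_mul hDm lam,
      hmix_u, hmix_z, hmix_m, hzt, hmt]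
  have hβx : pdx β pt
      = UXX - (M * ZXX + ZX * MX) - ((lam * MX) * ZX + Z * (lam * MXX)) := by
    rw [hβ]
    simp only [pdt, pdx]
    rw [pd_sub (hDu.fun_sub (hdm.fun_mul hDz)) ((hDm.const_mul lam).fun_mul hdz),
      pd_sub hDu (hdm.fun_mul hDz), pd_mul hdm hDz,
      pd_mul (hDm.const_mul lam) hdz, pd_const_mul hDm lam]
  -- substitute everything and finish with algebra
  rw [hβt, hβx, hc, hk1, hk2, hα, hβ]
  simp only [pdx]

  have hW1 : Z ^ e1 = Z ^ (2 / (γ - 1)) * Z := by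
    rw [show e1 = 2 / (γ - 1) + 1 by rw [he1]; field_simp; ring,
      Real.rpow_add hZpos, Real.rpow_one]
  have hW2 : Z ^ (e1 - 1) = Z ^ (2 / (γ - 1)) := by
    rw [show e1 - 1 = 2 / (γ - 1) by rw [he1]; field_simp; ring]
  have hW3 : Z ^ e2 = Z ^ (2 / (γ - 1)) * Z * Z := by
    rw [show e2 = 2 / (γ - 1) + 1 + 1 by rw [he2]; field_simp; ring,
      Real.rpow_add hZpos, Real.rpow_add hZpos, Real.rpow_one]
  have hW4 : Z ^ (e2 - 1) = Z ^ (2 / (γ - 1)) * Z := by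
    rw [show e2 - 1 = 2 / (γ - 1) + 1 by rw [he2]; field_simp; ring,
      Real.rpow_add hZpos, Real.rpow_one]
  rw [hW1, hW2, hW3, hW4, hlam, he1, he2]
  field_simp
  ring
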